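/- For every integer k ≥ 2, writing D_{k,ω} = τ_{2/k} ∗ g_k as a Dirichlet convolution (where g_k is the multiplicative function determined by this identity), the Dirichlet series ∑_{d=1}^∞ |g_k(d)|/d^σ converges for every real σ > 1/2. -/

import Mathlib

open Finset

noncomputable def Dkω (k n : ℕ) : ℝ :=
  (n.divisors.card : ℝ) / (k : ℝ) ^ n.primeFactors.card

noncomputable def tauzR (z : ℝ) (n : ℕ) : ℝ :=
  ∏ p ∈ n.primeFactors,
    (∏ i ∈ Finset.range (n.factorization p), (z + (i : ℝ))) /
      ((n.factorization p).factorial : ℝ)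

noncomputable def acoef (z : ℝ) (j : ℕ) : ℝ := (∏ i ∈ range j, (z + i)) / j.factorial
lemma descPoch_smeval_prod (r : ℝ) (k : ℕ) :
    (descPochhammer ℤ k).smeval r = ∏ i ∈ range k, (r - i) := by
  induction k with
  | zero => simp [descPochhammer_zero]
  | succ k ih =>
    rw [descPochhammer_succ_right, Polynomial.smeval_mul, ih, prod_range_succ]
    congr 1
    simp [Polynomial.smeval_sub, Polynomial.smeval_X, Polynomial.smeval_natCast]

lemma acoef_eq_choose (z : ℝ) (j : ℕ) :
    acoef z j = (-1 : ℝ) ^ j * Ring.choose (-z) j := by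
  have h1 := Ring.descPochhammer_eq_factorial_smul_choose (R := ℝ) (-z) j
  rw [descPoch_smeval_prod] at h1
  have h2 : ∏ i ∈ range j, (-z - (i:ℝ)) = (-1 : ℝ) ^ j * ∏ i ∈ range j, (z + i) := by
    calc ∏ i ∈ range j, (-z - (i:ℝ)) = ∏ i ∈ range j, (-1) * (z + (i:ℝ)) :=
          prod_congr rfl (fun i _ => by ring)
      _ = (-1 : ℝ) ^ j * ∏ i ∈ range j, (z + (i:ℝ)) := by
          rw [prod_mul_distrib, prod_const, card_range]
  rw [h2] at h1
  have hfac : (j.factorial : ℝ) ≠ 0 := by exact_mod_cast j.factorial_ne_zero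
  rw [nsmul_eq_mul] at h1
  have hsq : ((-1:ℝ)^j) * ((-1:ℝ)^j) = 1 := by
    rw [← pow_add]; exact Even.neg_one_pow ⟨j, rfl⟩
  have h3 : ∏ i ∈ range j, (z + (i:ℝ)) = (-1:ℝ)^j * ((j.factorial : ℝ) * Ring.choose (-z) j) := by
    rw [← h1, ← mul_assoc, hsq, one_mul]
  rw [acoef, div_eq_iff hfac, h3]; ring

lemma acoef_conv (z : ℝ) (α : ℕ) (hα : 1 ≤ α) :
    ∑ ij ∈ antidiagonal α, acoef z ij.1 * acoef (-z) ij.2 = 0 := by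
  have key : ∀ ij ∈ antidiagonal α, acoef z ij.1 * acoef (-z) ij.2
      = (-1:ℝ)^α * (Ring.choose (-z) ij.1 * Ring.choose z ij.2) := by
    intro ij hij
    rw [acoef_eq_choose, acoef_eq_choose, neg_neg]
    rw [Finset.HasAntidiagonal.mem_antidiagonal] at hij
    rw [← hij, pow_add]; ring
  rw [sum_congr rfl key, ← mul_sum, ← Ring.add_choose_eq α (Commute.all _ _), neg_add_cancel]
  have : Ring.choose (0:ℝ) α = 0 := by
    have h1 := Ring.descPochhammer_eq_factorial_smul_choose (R := ℝ) 0 α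
    rw [descPoch_smeval_prod] at h1
    have h0 : ∏ i ∈ range α, ((0:ℝ) - i) = 0 := by
      apply prod_eq_zero (mem_range.mpr hα); simp
    rw [h0, nsmul_eq_mul] at h1
    have hfac : (α.factorial : ℝ) ≠ 0 := by exact_mod_cast α.factorial_ne_zero
    exact (mul_eq_zero.mp h1.symm).resolve_left hfac
  rw [this, mul_zero]
lemma tauzR_one (z : ℝ) : tauzR z 1 = 1 := by simp [tauzR]

lemma tauzR_prime_pow {p : ℕ} (hp : p.Prime) (z : ℝ) (α : ℕ) :
    tauzR z (p ^ α) = acoef z α := by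
  rcases Nat.eq_zero_or_pos α with rfl | hα
  · simp [tauzR, acoef]
  · rw [tauzR, Nat.primeFactors_prime_pow hα.ne' hp]
    rw [prod_singleton, hp.factorization_pow, Finsupp.single_eq_same]
    rfl

lemma tauzR_mul_coprime {z : ℝ} {m n : ℕ} (hm : m ≠ 0) (hn : n ≠ 0) (h : m.Coprime n) :
    tauzR z (m * n) = tauzR z m * tauzR z n := by
  have hd : Disjoint m.primeFactors n.primeFactors := h.disjoint_primeFactors
  rw [tauzR, Nat.primeFactors_mul hm hn, prod_union hd, tauzR, tauzR]
  congr 1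
  · refine prod_congr rfl fun p hpm => ?_
    have h0 : n.factorization p = 0 := by
      refine Nat.factorization_eq_zero_of_not_dvd fun hdvd => ?_
      have hpp : p.Prime := Nat.prime_of_mem_primeFactors hpm
      have := Nat.dvd_gcd (Nat.dvd_of_mem_primeFactors hpm) hdvd
      rw [Nat.Coprime.gcd_eq_one h] at this
      exact hpp.one_lt.ne' (Nat.eq_one_of_dvd_one this)
    rw [Nat.factorization_mul hm hn]
    simp [h0]
  · refine prod_congr rfl fun p hpn => ?_
    have h0 : m.factorization p = 0 := by
      refine Nat.factorization_eq_zero_of_not_dvd fun hdvd => ?_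
      have hpp : p.Prime := Nat.prime_of_mem_primeFactors hpn
      have := Nat.dvd_gcd hdvd (Nat.dvd_of_mem_primeFactors hpn)
      rw [Nat.Coprime.gcd_eq_one h] at this
      exact hpp.one_lt.ne' (Nat.eq_one_of_dvd_one this)
    rw [Nat.factorization_mul hm hn]
    simp [h0]

noncomputable def Tz (z : ℝ) : ArithmeticFunction ℝ :=
  ⟨fun n => if n = 0 then 0 else tauzR z n, by simp⟩

lemma Tz_apply {z : ℝ} {n : ℕ} (hn : n ≠ 0) : Tz z n = tauzR z n := by
  simp [Tz, hn, ArithmeticFunction.coe_mk]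

lemma Tz_mult (z : ℝ) : (Tz z).IsMultiplicative := by
  refine ⟨by simp [Tz, tauzR_one, ArithmeticFunction.coe_mk], fun {m n} h => ?_⟩
  rcases eq_or_ne m 0 with rfl | hm
  · have : n = 1 := Nat.coprime_zero_left n |>.mp h
    subst this; simp [Tz, tauzR_one, ArithmeticFunction.coe_mk]
  rcases eq_or_ne n 0 with rfl | hn
  · have : m = 1 := Nat.coprime_zero_right m |>.mp h
    subst this; simp [Tz, tauzR_one, ArithmeticFunction.coe_mk]
  rw [Tz_apply (Nat.mul_ne_zero hm hn), Tz_apply hm, Tz_apply hn,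
    tauzR_mul_coprime hm hn h]

lemma Dkω_zero (k : ℕ) : Dkω k 0 = 0 := by simp [Dkω]

lemma Dkω_one (k : ℕ) : Dkω k 1 = 1 := by simp [Dkω]

lemma Dkω_prime_pow {p : ℕ} (hp : p.Prime) (k α : ℕ) (hα : 1 ≤ α) :
    Dkω k (p ^ α) = ((α : ℝ) + 1) / k := by
  rw [Dkω, Nat.divisors_prime_pow hp, card_map, card_range,
    Nat.primeFactors_prime_pow (by omega : α ≠ 0) hp, card_singleton]
  push_cast
  ring_nf

lemma Dkω_mul_coprime {k m n : ℕ} (hm : m ≠ 0) (hn : n ≠ 0) (h : m.Coprime n) :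
    Dkω k (m * n) = Dkω k m * Dkω k n := by
  rw [Dkω, Dkω, Dkω, h.card_divisors_mul, Nat.primeFactors_mul hm hn,
    card_union_of_disjoint h.disjoint_primeFactors, pow_add, div_mul_div_comm]
  push_cast
  ring

noncomputable def Dk (k : ℕ) : ArithmeticFunction ℝ := ⟨Dkω k, Dkω_zero k⟩

lemma Dk_apply (k n : ℕ) : Dk k n = Dkω k n := rfl

lemma Dk_mult (k : ℕ) : (Dk k).IsMultiplicative := by
  refine ⟨by simpa [Dk_apply] using Dkω_one k, fun {m n} h => ?_⟩
  rcases eq_or_ne m 0 with rfl | hm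
  · have : n = 1 := Nat.coprime_zero_left n |>.mp h
    subst this; simp [Dk_apply, Dkω_zero, Dkω_one]
  rcases eq_or_ne n 0 with rfl | hn
  · have : m = 1 := Nat.coprime_zero_right m |>.mp h
    subst this; simp [Dk_apply, Dkω_zero, Dkω_one]
  simpa [Dk_apply] using Dkω_mul_coprime hm hn h
lemma mul_apply_prime_pow (f g : ArithmeticFunction ℝ) {p : ℕ} (hp : p.Prime) (α : ℕ) :
    (f * g) (p ^ α) = ∑ j ∈ range (α + 1), f (p ^ j) * g (p ^ (α - j)) := by
  rw [ArithmeticFunction.mul_apply,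
    Nat.sum_divisorsAntidiagonal (f := fun a b => f a * g b),
    Nat.sum_divisors_prime_pow hp]
  refine sum_congr rfl fun j hj => ?_
  rw [mem_range] at hj
  rw [Nat.pow_div (by omega) hp.pos]

lemma TzTneg (z : ℝ) : Tz z * Tz (-z) = 1 := by
  rw [ArithmeticFunction.IsMultiplicative.eq_iff_eq_on_prime_powers _ ((Tz_mult z).mul (Tz_mult (-z))) _
    ArithmeticFunction.isMultiplicative_one]
  intro p i hp
  rcases Nat.eq_zero_or_pos i with rfl | hi
  · simp [((Tz_mult z).mul (Tz_mult (-z))).map_one]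
  · rw [mul_apply_prime_pow _ _ hp]
    have hL : ∑ j ∈ range (i + 1), Tz z (p ^ j) * Tz (-z) (p ^ (i - j))
        = ∑ j ∈ range (i + 1), acoef z j * acoef (-z) (i - j) := by
      refine sum_congr rfl fun j hj => ?_
      rw [Tz_apply (pow_ne_zero _ hp.pos.ne'), Tz_apply (pow_ne_zero _ hp.pos.ne'),
        tauzR_prime_pow hp, tauzR_prime_pow hp]
    rw [hL, ← Finset.Nat.sum_antidiagonal_eq_sum_range_succ_mk
      (fun ij => acoef z ij.1 * acoef (-z) ij.2), acoef_conv z i hi]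
    have : p ^ i ≠ 1 := Nat.one_lt_pow hi.ne' hp.one_lt |>.ne'
    simp [ArithmeticFunction.one_apply, this, hp.one_lt.ne', hi.ne']

noncomputable def Gk (k : ℕ) : ArithmeticFunction ℝ := Tz (-(2 / (k:ℝ))) * Dk k

lemma Gk_mult (k : ℕ) : (Gk k).IsMultiplicative := (Tz_mult _).mul (Dk_mult k)

lemma Tz_mul_Gk (k : ℕ) : Tz (2 / (k:ℝ)) * Gk k = Dk k := by
  rw [Gk, ← mul_assoc, TzTneg, one_mul]

lemma g_eq_Gk (k : ℕ) (g : ℕ → ℝ)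
    (hg : ∀ n : ℕ, 0 < n →
      Dkω k n = ∑ d ∈ n.divisors, tauzR (2 / (k : ℝ)) d * g (n / d)) :
    ∀ n : ℕ, 0 < n → g n = Gk k n := by
  have hD : ∀ n : ℕ, 0 < n →
      Dkω k n = ∑ d ∈ n.divisors, tauzR (2 / (k : ℝ)) d * Gk k (n / d) := by
    intro n hn
    have := congrArg (fun f : ArithmeticFunction ℝ => f n) (Tz_mul_Gk k)
    simp only [ArithmeticFunction.mul_apply] at this
    rw [Nat.sum_divisorsAntidiagonal (f := fun a b => Tz (2/(k:ℝ)) a * Gk k b)] at this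
    rw [show Dkω k n = Dk k n from rfl, ← this]
    refine sum_congr rfl fun d hd => ?_
    rw [Tz_apply (Nat.pos_of_mem_divisors hd).ne']
  intro n
  induction n using Nat.strong_induction_on with
  | _ n IH =>
    intro hn
    have h1 : 1 ∈ n.divisors := Nat.one_mem_divisors.mpr hn.ne'
    have e1 := hg n hn
    have e2 := hD n hn
    rw [← Finset.add_sum_erase _ _ h1] at e1 e2
    rw [tauzR_one, one_mul, Nat.div_one] at e1 e2
    have hsum : ∑ d ∈ n.divisors.erase 1, tauzR (2/(k:ℝ)) d * g (n / d)
        = ∑ d ∈ n.divisors.erase 1, tauzR (2/(k:ℝ)) d * Gk k (n / d) := by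
      refine sum_congr rfl fun d hd => ?_
      obtain ⟨hd1, hdm⟩ := Finset.mem_erase.mp hd
      have hdvd : d ∣ n := Nat.dvd_of_mem_divisors hdm
      have hdpos : 0 < d := Nat.pos_of_mem_divisors hdm
      have hlt : n / d < n := Nat.div_lt_self hn (by omega)
      have hpos : 0 < n / d := Nat.div_pos (Nat.le_of_dvd hn hdvd) hdpos
      rw [IH _ hlt hpos]
    rw [hsum] at e1
    linarith [e1, e2]
lemma sq_le_exp3 {x : ℝ} (hx : 0 ≤ x) : x^2 / 3 ≤ Real.exp x := by
  have h1 : x/3 + 1 ≤ Real.exp (x/3) := Real.add_one_le_exp _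
  have h2 : (x/3 + 1)^3 ≤ (Real.exp (x/3))^3 :=
    pow_le_pow_left₀ (by positivity) h1 3
  have h3 : (Real.exp (x/3))^3 = Real.exp x := by
    rw [← Real.exp_nat_mul]; congr 1; ring
  nlinarith [h2, h3, sq_nonneg x, pow_pos (show (0:ℝ) < x/3 + 1 by positivity) 3]

lemma sq_succ_le_four_pow (α : ℕ) : ((α:ℝ)+1)^2 ≤ 4^α := by
  induction α with
  | zero => norm_num
  | succ α ih =>
    have h4 : (0:ℝ) < 4^α := by positivity
    have hα0 : (0:ℝ) ≤ (α:ℝ) := Nat.cast_nonneg α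
    push_cast
    push_cast at ih
    rw [pow_succ (4:ℝ) α]
    nlinarith [ih, hα0, h4]

lemma prod_primeFactors_pow_eq (n : ℕ) (hn : n ≠ 0) :
    ∏ p ∈ n.primeFactors, p ^ n.factorization p = n := by
  rw [← Nat.support_factorization]
  exact Nat.factorization_prod_pow_eq_self hn

lemma epsBound (ε : ℝ) (hε : 0 < ε) : ∃ C : ℝ, 1 ≤ C ∧ ∀ n : ℕ, n ≠ 0 →
    ∏ p ∈ n.primeFactors, (((n.factorization p : ℝ)) + 1)^2 ≤ C * (n:ℝ) ^ ε := by
  set c : ℝ := ε * Real.log 2 with hc_def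
  have hc : 0 < c := mul_pos hε (Real.log_pos one_lt_two)
  set M : ℝ := 6 / c^2 + 2 with hM_def
  have hM : 1 ≤ M := by
    have h0 : 0 < 6 / c^2 := by positivity
    rw [hM_def]; linarith
  set B : ℕ := ⌈(4:ℝ) ^ (1/ε)⌉₊ with hB_def
  refine ⟨M ^ (B + 1), one_le_pow₀ hM, fun n hn => ?_⟩
  -- per-prime bound
  have key : ∀ p ∈ n.primeFactors,
      ((n.factorization p : ℝ) + 1)^2
        ≤ (if p ≤ B then M else 1) * (((p:ℝ) ^ (n.factorization p)) ^ ε) := by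
    intro p hp
    have hpp : p.Prime := Nat.prime_of_mem_primeFactors hp
    have hp2 : (2:ℝ) ≤ p := by exact_mod_cast hpp.two_le
    set α : ℕ := n.factorization p with hα_def
    have hppow : (0:ℝ) ≤ (p:ℝ) ^ α := by positivity
    by_cases hpB : p ≤ B
    · simp only [hpB, if_true]
      -- small prime case
      have hexp : Real.exp ((α:ℝ) * c) ≤ ((p:ℝ) ^ α) ^ ε := by
        have h2p : ((2:ℝ) ^ α) ^ ε ≤ ((p:ℝ) ^ α) ^ ε := by
          apply Real.rpow_le_rpow (by positivity) (pow_le_pow_left₀ (by norm_num) hp2 α) hε.le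
        have : ((2:ℝ) ^ α) ^ ε = Real.exp ((α:ℝ) * c) := by
          rw [← Real.rpow_natCast 2 α, ← Real.rpow_mul (by norm_num), hc_def,
            Real.rpow_def_of_pos (by norm_num)]
          ring_nf
        linarith [h2p, this.ge, this.le]
      have he1 : (1:ℝ) ≤ Real.exp ((α:ℝ) * c) := by
        rw [Real.one_le_exp_iff]; positivity
      have he2 : ((α:ℝ) * c)^2 / 3 ≤ Real.exp ((α:ℝ) * c) := sq_le_exp3 (by positivity)
      have hMe : ((α:ℝ) + 1)^2 ≤ M * Real.exp ((α:ℝ)*c) := by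
        have hα0 : (0:ℝ) ≤ (α:ℝ) := Nat.cast_nonneg _
        have expand : ((α:ℝ)*c)^2 = (α:ℝ)^2 * c^2 := by ring
        have h6 : (α:ℝ)^2 * c^2 / 3 ≤ Real.exp ((α:ℝ)*c) := by rw [← expand]; exact he2
        have hc2 : (0:ℝ) < c^2 := by positivity
        rw [hM_def, add_mul]
        have ha : (α:ℝ)^2 ≤ 3 / c^2 * Real.exp ((α:ℝ)*c) := by
          rw [div_mul_eq_mul_div, le_div_iff₀ hc2]
          nlinarith [h6]
        have h2a : 6 / c^2 * Real.exp ((α:ℝ)*c) = 2 * (3 / c^2 * Real.exp ((α:ℝ)*c)) := by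
          ring
        linarith [ha, he1, sq_nonneg ((α:ℝ) - 1), h2a]
      calc ((α:ℝ) + 1)^2 ≤ M * Real.exp ((α:ℝ)*c) := hMe
        _ ≤ M * (((p:ℝ) ^ α) ^ ε) := by
            apply mul_le_mul_of_nonneg_left hexp (by linarith)
    · simp only [hpB, if_false, one_mul]
      -- large prime case
      have hpB' : ((4:ℝ) ^ (1/ε)) ≤ (p:ℝ) := by
        have : B < p := Nat.lt_of_not_le hpB
        calc ((4:ℝ) ^ (1/ε)) ≤ (B:ℝ) := Nat.le_ceil _ |>.trans (by exact_mod_cast le_refl _)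
          _ ≤ (p:ℝ) := by exact_mod_cast this.le
      have h4p : (4:ℝ) ≤ (p:ℝ) ^ ε := by
        have := Real.rpow_le_rpow (by positivity) hpB' hε.le
        rwa [← Real.rpow_mul (by norm_num), one_div_mul_cancel hε.ne',
          Real.rpow_one] at this
      calc ((α:ℝ) + 1)^2 ≤ 4^α := sq_succ_le_four_pow α
        _ ≤ ((p:ℝ) ^ ε)^α := pow_le_pow_left₀ (by norm_num) h4p α
        _ = ((p:ℝ) ^ α) ^ ε := by
            rw [← Real.rpow_natCast ((p:ℝ)^ε) α, ← Real.rpow_mul (by positivity),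
              ← Real.rpow_natCast (p:ℝ) α, ← Real.rpow_mul (by positivity), mul_comm]
  -- multiply over primes
  have step2 : ∏ p ∈ n.primeFactors, ((n.factorization p : ℝ) + 1)^2
      ≤ ∏ p ∈ n.primeFactors, ((if p ≤ B then M else 1) * (((p:ℝ) ^ (n.factorization p)) ^ ε)) := by
    apply prod_le_prod (fun p _ => by positivity) key
  have step3 : ∏ p ∈ n.primeFactors, ((if p ≤ B then M else 1) * (((p:ℝ) ^ (n.factorization p)) ^ ε))
      = (∏ p ∈ n.primeFactors, (if p ≤ B then M else 1))
        * ∏ p ∈ n.primeFactors, (((p:ℝ) ^ (n.factorization p)) ^ ε) := prod_mul_distrib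
  have step4 : (∏ p ∈ n.primeFactors, (if p ≤ B then M else (1:ℝ))) ≤ M ^ (B + 1) := by
    rw [Finset.prod_ite, Finset.prod_const, Finset.prod_const, one_pow, mul_one]
    have hcard : (n.primeFactors.filter (fun p => p ≤ B)).card ≤ B + 1 := by
      have hsub : n.primeFactors.filter (fun p => p ≤ B) ⊆ Finset.range (B+1) := by
        intro p hp
        rw [Finset.mem_range]
        have := (Finset.mem_filter.mp hp).2
        omega
      calc _ ≤ (Finset.range (B+1)).card := Finset.card_le_card hsub
        _ = B + 1 := Finset.card_range _
    exact pow_le_pow_right₀ hM hcard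
  have step5 : ∏ p ∈ n.primeFactors, (((p:ℝ) ^ (n.factorization p)) ^ ε) = (n:ℝ) ^ ε := by
    rw [Real.finset_prod_rpow _ _ (fun p _ => by positivity)]
    congr 1
    conv_rhs => rw [← prod_primeFactors_pow_eq n hn]
    push_cast
    rfl
  calc ∏ p ∈ n.primeFactors, ((n.factorization p : ℝ) + 1)^2
      ≤ _ := step2
    _ = _ := step3
    _ ≤ M ^ (B+1) * (n:ℝ) ^ ε := by
        rw [step5]
        apply mul_le_mul_of_nonneg_right step4 (by positivity)
def PowerfulN (n : ℕ) : Prop := ∀ p : ℕ, p.Prime → p ∣ n → p ^ 2 ∣ n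

lemma acoef_neg_abs_le_one {z : ℝ} (h0 : 0 < z) (h1 : z ≤ 1) (j : ℕ) :
    |acoef (-z) j| ≤ 1 := by
  rw [acoef, abs_div, abs_of_nonneg (by positivity : (0:ℝ) ≤ (j.factorial : ℝ))]
  rw [div_le_one (by positivity : (0:ℝ) < (j.factorial : ℝ))]
  calc |∏ i ∈ range j, (-z + (i:ℝ))| = ∏ i ∈ range j, |(-z + (i:ℝ))| := abs_prod _ _
    _ ≤ ∏ i ∈ range j, ((i:ℝ) + 1) := by
        refine prod_le_prod (fun i _ => abs_nonneg _) (fun i _ => ?_)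
        rw [abs_le]
        constructor <;> nlinarith [Nat.cast_nonneg (α := ℝ) i]
    _ = (j.factorial : ℝ) := by
        exact_mod_cast congrArg (Nat.cast (R := ℝ)) (prod_range_add_one_eq_factorial j)

lemma Dkω_nonneg (k n : ℕ) : 0 ≤ Dkω k n := by
  rw [Dkω]; positivity

lemma Dkω_prime_pow_le {k p : ℕ} (hk : 2 ≤ k) (hp : p.Prime) (m : ℕ) :
    Dkω k (p ^ m) ≤ (m:ℝ) + 1 := by
  rcases Nat.eq_zero_or_pos m with rfl | hm
  · simp [Dkω_one]
  · rw [Dkω_prime_pow hp k m hm]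
    have hk1 : (1:ℝ) ≤ (k:ℝ) := by exact_mod_cast Nat.one_le_of_lt hk
    rw [div_le_iff₀ (by linarith)]
    nlinarith [Nat.cast_nonneg (α := ℝ) m]

lemma Gk_prime_pow_abs_le {k p : ℕ} (hk : 2 ≤ k) (hp : p.Prime) (α : ℕ) :
    |Gk k (p ^ α)| ≤ ((α:ℝ) + 1) ^ 2 := by
  have hz0 : (0:ℝ) < 2 / (k:ℝ) := by
    have : (0:ℝ) < (k:ℝ) := by exact_mod_cast Nat.lt_of_lt_of_le two_pos hk
    positivity
  have hz1 : 2 / (k:ℝ) ≤ 1 := by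
    have : (2:ℝ) ≤ (k:ℝ) := by exact_mod_cast hk
    rw [div_le_one (by linarith)]; linarith
  rw [Gk, mul_apply_prime_pow _ _ hp]
  calc |∑ j ∈ range (α + 1), Tz (-(2/(k:ℝ))) (p ^ j) * Dk k (p ^ (α - j))|
      ≤ ∑ j ∈ range (α + 1), |Tz (-(2/(k:ℝ))) (p ^ j) * Dk k (p ^ (α - j))| :=
        Finset.abs_sum_le_sum_abs _ _
    _ ≤ ∑ j ∈ range (α + 1), ((α:ℝ) + 1) := by
        refine sum_le_sum fun j hj => ?_
        rw [abs_mul]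
        have h1 : |Tz (-(2/(k:ℝ))) (p ^ j)| ≤ 1 := by
          rw [Tz_apply (pow_ne_zero _ hp.pos.ne'), tauzR_prime_pow hp]
          exact acoef_neg_abs_le_one hz0 hz1 j
        have h2 : |Dk k (p ^ (α - j))| ≤ (α:ℝ) + 1 := by
          rw [Dk_apply, abs_of_nonneg (Dkω_nonneg _ _)]
          refine (Dkω_prime_pow_le hk hp _).trans ?_
          have : ((α - j : ℕ):ℝ) ≤ (α:ℝ) := by
            exact_mod_cast Nat.sub_le α j
          linarith
        calc |Tz (-(2/(k:ℝ))) (p ^ j)| * |Dk k (p ^ (α - j))|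
            ≤ 1 * ((α:ℝ) + 1) := by
              apply mul_le_mul h1 h2 (abs_nonneg _) zero_le_one
          _ = (α:ℝ) + 1 := one_mul _
    _ = ((α:ℝ) + 1) ^ 2 := by
        rw [sum_const, card_range]
        ring

lemma Gk_prime {k p : ℕ} (hk : 2 ≤ k) (hp : p.Prime) : Gk k (p ^ 1) = 0 := by
  have hkR : (k:ℝ) ≠ 0 := by
    have : (0:ℝ) < (k:ℝ) := by exact_mod_cast Nat.lt_of_lt_of_le two_pos hk
    exact this.ne'
  rw [Gk, mul_apply_prime_pow _ _ hp]
  rw [show range (1+1) = {0, 1} from rfl]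
  rw [sum_insert (by simp), sum_singleton]
  have e1 : Tz (-(2/(k:ℝ))) (p ^ 0) = 1 := by
    rw [pow_zero, Tz_apply one_ne_zero, tauzR_one]
  have e2 : Tz (-(2/(k:ℝ))) (p ^ 1) = -(2/(k:ℝ)) := by
    rw [Tz_apply (pow_ne_zero _ hp.pos.ne'), tauzR_prime_pow hp, acoef]
    simp
  have e3 : Dk k (p ^ (1 - 0)) = 2 / (k:ℝ) := by
    rw [Dk_apply, Dkω_prime_pow hp k 1 le_rfl]
    norm_num
  have e4 : Dk k (p ^ (1 - 1)) = 1 := by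
    rw [Dk_apply]; simp [Dkω_one]
  rw [e1, e2, e3, e4]
  ring

lemma Gk_eq_zero_of_not_powerful {k n : ℕ} (hk : 2 ≤ k) (hn : n ≠ 0)
    (h : ¬ PowerfulN n) : Gk k n = 0 := by
  rw [PowerfulN] at h
  push_neg at h
  obtain ⟨p, hp, hpdvd, hp2⟩ := h
  have hα : n.factorization p = 1 := by
    have h1 : 1 ≤ n.factorization p :=
      (Nat.Prime.pow_dvd_iff_le_factorization hp hn).mp (by simpa using hpdvd)
    have h2 : ¬ 2 ≤ n.factorization p := fun hc =>
      hp2 ((Nat.Prime.pow_dvd_iff_le_factorization hp hn).mpr hc)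
    omega
  rw [(Gk_mult k).multiplicative_factorization _ hn]
  refine Finsupp.prod_eq_zero_iff.mpr ⟨p, ?_, ?_⟩
  · rw [Nat.support_factorization]
    exact Nat.mem_primeFactors.mpr ⟨hp, hpdvd, hn⟩
  · rw [hα]
    exact Gk_prime hk hp

lemma Gk_abs_le {k n : ℕ} (hk : 2 ≤ k) (hn : n ≠ 0) :
    |Gk k n| ≤ ∏ p ∈ n.primeFactors, ((n.factorization p : ℝ) + 1) ^ 2 := by
  rw [(Gk_mult k).multiplicative_factorization _ hn, Finsupp.prod,
    Nat.support_factorization, abs_prod]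
  refine prod_le_prod (fun p _ => abs_nonneg _) (fun p hp => ?_)
  exact Gk_prime_pow_abs_le hk (Nat.prime_of_mem_primeFactors hp) _

lemma powerful_decomp {n : ℕ} (hn : n ≠ 0) (h : PowerfulN n) :
    ∃ a b : ℕ, a ≠ 0 ∧ b ≠ 0 ∧ a ^ 2 * b ^ 3 = n := by
  refine ⟨∏ p ∈ n.primeFactors, p ^ ((n.factorization p - 3 * (n.factorization p % 2)) / 2),
    ∏ p ∈ n.primeFactors, p ^ (n.factorization p % 2), ?_, ?_, ?_⟩
  · refine Finset.prod_ne_zero_iff.mpr fun p hp => ?_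
    exact pow_ne_zero _ (Nat.prime_of_mem_primeFactors hp).pos.ne'
  · refine Finset.prod_ne_zero_iff.mpr fun p hp => ?_
    exact pow_ne_zero _ (Nat.prime_of_mem_primeFactors hp).pos.ne'
  · rw [← Finset.prod_pow, ← Finset.prod_pow, ← Finset.prod_mul_distrib]
    conv_rhs => rw [← prod_primeFactors_pow_eq n hn]
    refine prod_congr rfl fun p hp => ?_
    have hpp := Nat.prime_of_mem_primeFactors hp
    have hα : 2 ≤ n.factorization p :=
      (Nat.Prime.pow_dvd_iff_le_factorization hpp hn).mp
        (h p hpp (Nat.dvd_of_mem_primeFactors hp))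
    rw [← pow_mul, ← pow_mul, ← pow_add]
    congr 1
    omega
lemma powerful_rpow_summable {s : ℝ} (hs : 1/2 < s) :
    Summable (Set.indicator {m : ℕ | PowerfulN m ∧ m ≠ 0} (fun m => (m:ℝ) ^ (-s))) := by
  set T : Set ℕ := {m : ℕ | PowerfulN m ∧ m ≠ 0} with hT_def
  rw [← summable_subtype_iff_indicator]
  have hex : ∀ m : T, ∃ ab : ℕ × ℕ, ab.1 ≠ 0 ∧ ab.2 ≠ 0 ∧ ab.1 ^ 2 * ab.2 ^ 3 = (m:ℕ) := by
    rintro ⟨m, hmpow, hmne⟩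
    obtain ⟨a, b, ha, hb, hab⟩ := powerful_decomp hmne hmpow
    exact ⟨(a, b), ha, hb, hab⟩
  set F : T → ℕ × ℕ := fun m => Classical.choose (hex m) with hF_def
  have hFspec : ∀ m : T, (F m).1 ≠ 0 ∧ (F m).2 ≠ 0 ∧ (F m).1 ^ 2 * (F m).2 ^ 3 = (m:ℕ) :=
    fun m => Classical.choose_spec (hex m)
  have hinj : Function.Injective F := by
    intro m₁ m₂ hF
    have h1 := (hFspec m₁).2.2
    have h2 := (hFspec m₂).2.2
    apply Subtype.ext
    rw [← h1, ← h2, hF]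
  have hE : Summable (fun q : ℕ × ℕ => ((q.1:ℝ) ^ (-(2*s))) * ((q.2:ℝ) ^ (-(3*s)))) :=
    Summable.mul_of_nonneg (f := fun n : ℕ => (n:ℝ) ^ (-(2*s)))
      (g := fun n : ℕ => (n:ℝ) ^ (-(3*s)))
      (Real.summable_nat_rpow.mpr (by linarith))
      (Real.summable_nat_rpow.mpr (by linarith))
      (fun n => Real.rpow_nonneg (Nat.cast_nonneg _) _)
      (fun n => Real.rpow_nonneg (Nat.cast_nonneg _) _)
  have := hE.comp_injective hinj
  refine this.congr fun m => ?_
  obtain ⟨ha, hb, hab⟩ := hFspec m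
  have haR : (0:ℝ) ≤ ((F m).1 : ℝ) := Nat.cast_nonneg _
  have hbR : (0:ℝ) ≤ ((F m).2 : ℝ) := Nat.cast_nonneg _
  show ((F m).1 : ℝ) ^ (-(2*s)) * ((F m).2 : ℝ) ^ (-(3*s)) = ((m:ℕ):ℝ) ^ (-s)
  rw [← hab]
  push_cast
  rw [Real.mul_rpow (by positivity) (by positivity)]
  rw [← Real.rpow_natCast ((F m).1 : ℝ) 2, ← Real.rpow_natCast ((F m).2 : ℝ) 3,
    ← Real.rpow_mul haR, ← Real.rpow_mul hbR]
  norm_num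

/-- For `k ≥ 2`, if `g` is the arithmetic function with `D_{k,ω} = τ_{2/k} ∗ g`
(Dirichlet convolution), then `∑_d |g(d)|/d^σ` converges for every real `σ > 1/2`. -/
theorem summable_gk (k : ℕ) (hk : 2 ≤ k) (g : ℕ → ℝ)
    (hg : ∀ n : ℕ, 0 < n →
      Dkω k n = ∑ d ∈ n.divisors, tauzR (2 / (k : ℝ)) d * g (n / d)) :
    ∀ σ : ℝ, 1 / 2 < σ →
      Summable (fun d : ℕ => |g (d + 1)| / ((d : ℝ) + 1) ^ σ) := by
  intro σ hσ
  have hgG := g_eq_Gk k g hg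
  set ε : ℝ := (σ - 1/2)/2 with hε_def
  have hε : 0 < ε := by rw [hε_def]; linarith
  obtain ⟨C, hC1, hC⟩ := epsBound ε hε
  set s : ℝ := σ - ε with hs_def
  have hs : 1/2 < s := by rw [hs_def, hε_def]; linarith
  have hW := powerful_rpow_summable hs
  set W : ℕ → ℝ := Set.indicator {m : ℕ | PowerfulN m ∧ m ≠ 0} (fun m => (m:ℝ) ^ (-s))
    with hW_def
  have hWnonneg : ∀ m, 0 ≤ W m :=
    fun m => Set.indicator_nonneg (fun x _ => Real.rpow_nonneg (Nat.cast_nonneg _) _) m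
  have hsummajor : Summable (fun d : ℕ => C * W (d + 1)) := by
    apply Summable.mul_left C
    exact hW.comp_injective (add_left_injective 1)
  refine Summable.of_nonneg_of_le (fun d => by positivity) (fun d => ?_) hsummajor
  set n : ℕ := d + 1 with hn_def
  have hn : n ≠ 0 := by omega
  have hnpos : (0:ℝ) < (n:ℝ) := by
    have : 0 < n := by omega
    exact_mod_cast this
  have hcast : ((d:ℝ) + 1) = (n:ℝ) := by rw [hn_def]; push_cast; ring
  have hgn : g (d + 1) = Gk k n := hgG n (by omega)
  rw [hgn, hcast]
  by_cases hpow : PowerfulN n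
  · have hmem : n ∈ {m : ℕ | PowerfulN m ∧ m ≠ 0} := ⟨hpow, hn⟩
    have hWval : W n = (n:ℝ) ^ (-s) := by
      rw [hW_def]; exact Set.indicator_of_mem hmem _
    rw [hWval]
    have hbound : |Gk k n| ≤ C * (n:ℝ) ^ ε := (Gk_abs_le hk hn).trans (hC n hn)
    rw [div_le_iff₀ (by positivity : (0:ℝ) < (n:ℝ) ^ σ)]
    calc |Gk k n| ≤ C * (n:ℝ) ^ ε := hbound
      _ = C * (n:ℝ) ^ (-s) * (n:ℝ) ^ σ := by
          rw [mul_assoc, ← Real.rpow_add hnpos]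
          congr 2
          rw [hs_def]; ring
  · have hGzero : Gk k n = 0 := Gk_eq_zero_of_not_powerful hk hn hpow
    rw [hGzero]
    simp only [abs_zero, zero_div]
    exact mul_nonneg (by linarith) (hWnonneg _)
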